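/- Let S, Z be nonnegative random variables with Z ≥ βS almost surely for some β ∈ (0, 1], and fix z > 0. Then E[(max(0, min(S − (Z − z), 2z))² − ((S/Z)z)²)·1(Z > z)] ≤ 3z·max(1 − β, 0)·E[S·1(Z > z)]. -/
import Mathlib

open MeasureTheory

lemma key_pointwise (β z S Z : ℝ) (hβ : 0 < β) (hβ1 : β ≤ 1) (hz : 0 < z)
    (hS : 0 ≤ S) (hZ : 0 ≤ Z) (hest : β * S ≤ Z) (hzZ : z < Z) :
    (max 0 (min (S - (Z - z)) (2 * z)))^2 - ((S / Z) * z)^2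
      ≤ 3 * z * max (1 - β) 0 * S := by
  have hZ0 : 0 < Z := lt_trans hz hzZ
  have hB0 : 0 ≤ S / Z * z := by positivity
  have hmax : 0 ≤ max (1 - β) 0 := le_max_right _ _
  have hmaxβ : 1 - β ≤ max (1 - β) 0 := le_max_left _ _
  have hRHS0 : 0 ≤ 3 * z * max (1 - β) 0 * S := by positivity
  have hB2 : (S / Z * z) ^ 2 * Z ^ 2 = (S * z) ^ 2 := by
    field_simp
  rcases le_or_gt (min (S - (Z - z)) (2 * z)) 0 with hm | hm
  · rw [max_eq_left hm]
    nlinarith [sq_nonneg (S / Z * z)]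
  · rw [max_eq_right hm.le]
    have hD : S - Z ≤ (1 - β) * S := by nlinarith
    have hRD : 3 * z * (S - Z) ≤ 3 * z * max (1 - β) 0 * S := by
      have h1 : S - Z ≤ max (1 - β) 0 * S := le_trans hD (by nlinarith)
      nlinarith
    rcases le_or_gt (S - (Z - z)) (2 * z) with h1 | h1
    · rw [min_eq_left h1]
      have hA0 : 0 < S - (Z - z) := (lt_min_iff.mp hm).1
      rcases le_or_gt S Z with h2 | h2
      · -- A ≤ B, so LHS ≤ 0
        have hAB : S - (Z - z) ≤ S / Z * z := by
          rw [div_mul_eq_mul_div, le_div_iff₀ hZ0]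
          nlinarith
        have hsq : (S - (Z - z)) ^ 2 ≤ (S / Z * z) ^ 2 :=
          pow_le_pow_left₀ hA0.le hAB 2
        linarith
      · -- S > Z ; here S - Z ≤ z
        have hDz : S - Z ≤ z := by linarith
        have hq : (S - (Z - z)) ^ 2 * Z ^ 2 - (S * z) ^ 2 ≤ 3 * z * (S - Z) * Z ^ 2 := by
          nlinarith [mul_pos (sub_pos.mpr h2) (sub_pos.mpr hzZ),
            mul_nonneg (mul_nonneg (sub_pos.mpr h2).le hz.le) hz.le,
            mul_nonneg (mul_nonneg (sub_nonneg.mpr hDz) hz.le) hZ0.le,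
            mul_nonneg (mul_nonneg (sub_nonneg.mpr hDz) (sub_pos.mpr hzZ).le) hZ0.le,
            mul_nonneg (mul_nonneg (sub_pos.mpr h2).le (sub_pos.mpr hzZ).le) hz.le,
            sq_nonneg (S - Z), sq_nonneg Z, mul_pos hZ0 hZ0]
        have hstep : (S - (Z - z)) ^ 2 - (S / Z * z) ^ 2 ≤ 3 * z * (S - Z) := by
          nlinarith [hq, hB2, mul_pos hZ0 hZ0]
        linarith
    · rw [min_eq_right h1.le]
      -- A = 2z, here z < S - Z
      have hDz : z < S - Z := by linarith
      have hBz : z ≤ S / Z * z := by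
        have h2 : (1 : ℝ) ≤ S / Z := (one_le_div hZ0).mpr (by linarith)
        nlinarith
      have hBsq : z ^ 2 ≤ (S / Z * z) ^ 2 := pow_le_pow_left₀ hz.le hBz 2
      have h3 : 3 * z ^ 2 ≤ 3 * z * (S - Z) := by
        have he : 3 * z * (S - Z) - 3 * z ^ 2 = 3 * z * (S - Z - z) := by ring
        have hn : 0 ≤ 3 * z * (S - Z - z) :=
          mul_nonneg (by positivity) (by linarith)
        linarith
      have h4 : (2 * z) ^ 2 = 4 * z ^ 2 := by ring
      linarith only [hBsq, hRD, h3, h4]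

theorem stmt_6 {Ω : Type*} [MeasureSpace Ω] (μ : Measure Ω) [IsProbabilityMeasure μ]
    (S Z : Ω → ℝ) (β z : ℝ) (hβ : 0 < β) (hβ1 : β ≤ 1) (hz : 0 < z)
    (hS : ∀ᵐ ω ∂μ, 0 ≤ S ω) (hZ : ∀ᵐ ω ∂μ, 0 ≤ Z ω)
    (hest : ∀ᵐ ω ∂μ, β * S ω ≤ Z ω)
    (hint1 : Integrable (fun ω =>
      ((max 0 (min (S ω - (Z ω - z)) (2 * z)))^2 - ((S ω / Z ω) * z)^2)
        * (if z < Z ω then 1 else 0)) μ)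
    (hint2 : Integrable (fun ω => S ω * (if z < Z ω then 1 else 0)) μ) :
    ∫ ω, ((max 0 (min (S ω - (Z ω - z)) (2 * z)))^2 - ((S ω / Z ω) * z)^2)
        * (if z < Z ω then 1 else 0) ∂μ
      ≤ 3 * z * max (1 - β) 0 * ∫ ω, S ω * (if z < Z ω then 1 else 0) ∂μ := by
  set c : ℝ := 3 * z * max (1 - β) 0 with hc
  have hpt : ∀ᵐ ω ∂μ,
      ((max 0 (min (S ω - (Z ω - z)) (2 * z)))^2 - ((S ω / Z ω) * z)^2)
        * (if z < Z ω then 1 else 0)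
      ≤ c * (S ω * (if z < Z ω then 1 else 0)) := by
    filter_upwards [hS, hZ, hest] with ω h1 h2 h3
    by_cases h : z < Z ω
    · simp only [if_pos h, mul_one]
      exact key_pointwise β z (S ω) (Z ω) hβ hβ1 hz h1 h2 h3 h
    · simp [if_neg h]
  calc ∫ ω, ((max 0 (min (S ω - (Z ω - z)) (2 * z)))^2 - ((S ω / Z ω) * z)^2)
        * (if z < Z ω then 1 else 0) ∂μ
      ≤ ∫ ω, c * (S ω * (if z < Z ω then 1 else 0)) ∂μ :=
        integral_mono_ae hint1 (hint2.const_mul c) hpt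
    _ = c * ∫ ω, S ω * (if z < Z ω then 1 else 0) ∂μ := integral_const_mul c _
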